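/- Let C be a graph with tree decomposition (T, X), let S(V') be the set of candidate stub assignments for vertices in V', and call a stub set valid if it selects exactly one stub length per vertex and no two selected stubs intersect. Fix a node t ∈ T and a subset S ⊆ S(X_t). If S_1 and S_2 are two valid maximum-ink stub sets on all of V(C) with S_1 ∩ S(X_t) = S_2 ∩ S(X_t) = S, then I(S_1 ∩ S(V_t)) = I(S_2 ∩ S(V_t)), where V_t is the union of bags in the subtree of T rooted at t and I denotes total ink. -/
import Mathlib


open scoped Classical

/-- A tree decomposition of a graph `C`: a tree `T` with bags `X`, covering all vertices
and edges of `C`, such that the occurrences of each vertex form a connected subtree. -/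
structure TreeDecompOf {V ι : Type*} (C : SimpleGraph V) (T : SimpleGraph ι)
    (X : ι → Set V) : Prop where
  tree : T.IsTree
  covers_vertex : ∀ v, ∃ t, v ∈ X t
  covers_edge : ∀ ⦃u v⦄, C.Adj u v → ∃ t, u ∈ X t ∧ v ∈ X t
  connected : ∀ v t₁ t₂ t₃, v ∈ X t₁ → v ∈ X t₃ →
    ∀ p : T.Walk t₁ t₃, p.IsPath → t₂ ∈ p.support → v ∈ X t₂

/-- `t'` is a descendant of `t` in the tree `T` rooted at `r`
(i.e. `t` lies on the path from `r` to `t'`). -/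
def DescOf {ι : Type*} (T : SimpleGraph ι) (r t t' : ι) : Prop :=
  ∃ p : T.Walk r t', p.IsPath ∧ t ∈ p.support

/-- `V_t`: the union of the bags at `t` and its descendants. -/
def bagsBelow {V ι : Type*} (T : SimpleGraph ι) (X : ι → Set V) (r t : ι) : Set V :=
  {v | ∃ t', DescOf T r t t' ∧ v ∈ X t'}

theorem stmt7_sep {V ι : Type*} (T : SimpleGraph ι) (X : ι → Set V)
    (tree : T.IsTree)
    (conn : ∀ v t₁ t₂ t₃, v ∈ X t₁ → v ∈ X t₃ →
      ∀ p : T.Walk t₁ t₃, p.IsPath → t₂ ∈ p.support → v ∈ X t₂)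
    (r t : ι) (u : V)
    (hu : ∃ t', (∃ p : T.Walk r t', p.IsPath ∧ t ∈ p.support) ∧ u ∈ X t')
    (t₀ : ι) (hu0 : u ∈ X t₀)
    (hnd : ¬ ∃ p : T.Walk r t₀, p.IsPath ∧ t ∈ p.support) : u ∈ X t := by
  obtain ⟨t', ⟨p', hp', ht⟩, hu'⟩ := hu
  obtain ⟨w⟩ := tree.isConnected r t₀
  set p₀ := w.bypass with hp0def
  have hp₀ : p₀.IsPath := w.bypass_isPath
  have htnot : t ∉ p₀.support := fun h => hnd ⟨p₀, hp₀, h⟩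
  set q := ((p₀.reverse).append p').bypass with hq
  have hqp : q.IsPath := SimpleGraph.Walk.bypass_isPath _
  set w2 := p₀.append q with hw2
  obtain ⟨pp, -, hpp⟩ := tree.existsUnique_path r t'
  have e2 : p' = w2.bypass := (hpp p' hp').trans (hpp w2.bypass w2.bypass_isPath).symm
  have ht2 : t ∈ w2.support := SimpleGraph.Walk.support_bypass_subset _ (e2 ▸ ht)
  rw [hw2, SimpleGraph.Walk.mem_support_append_iff] at ht2
  exact conn u t₀ t t' hu0 hu' q hqp (ht2.resolve_left htnot)

theorem stmt7_le {V ι : Type*} [Fintype V] (C : SimpleGraph V)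
    (T : SimpleGraph ι) (X : ι → Set V)
    (tree : T.IsTree)
    (covers_edge : ∀ ⦃u v⦄, C.Adj u v → ∃ t, u ∈ X t ∧ v ∈ X t)
    (conn : ∀ v t₁ t₂ t₃, v ∈ X t₁ → v ∈ X t₃ →
      ∀ p : T.Walk t₁ t₃, p.IsPath → t₂ ∈ p.support → v ∈ X t₂)
    (r : ι)
    (cand : V → Finset ℝ)
    (meets : V → ℝ → V → ℝ → Prop)
    (meets_symm : ∀ u a v b, meets u a v b → meets v b u a)
    (meets_adj : ∀ u a v b, meets u a v b → C.Adj u v)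
    (valid : (V → ℝ) → Prop)
    (hvalid : ∀ c, valid c ↔
      (∀ u, c u ∈ cand u) ∧ ∀ u v, u ≠ v → ¬ meets u (c u) v (c v))
    (t : ι) (c₁ c₂ : V → ℝ)
    (h₁ : valid c₁) (h₂ : valid c₂)
    (hmax₂ : ∀ c, valid c → ∑ u, c u ≤ ∑ u, c₂ u)
    (hagree : ∀ u ∈ X t, c₁ u = c₂ u) :
    ∑ u ∈ Finset.univ.filter (fun u => u ∈ bagsBelow T X r t), c₁ u ≤
      ∑ u ∈ Finset.univ.filter (fun u => u ∈ bagsBelow T X r t), c₂ u := by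
  set P : V → Prop := fun u => u ∈ bagsBelow T X r t with hP
  set c₃ : V → ℝ := fun u => if P u then c₁ u else c₂ u with hc₃
  have key : ∀ u v, C.Adj u v → P u → ¬ P v → u ∈ X t := by
    intro u v hadj hu hv
    obtain ⟨t₀, hu0, hv0⟩ := covers_edge hadj
    have hnd : ¬ ∃ p : T.Walk r t₀, p.IsPath ∧ t ∈ p.support :=
      fun hd => hv ⟨t₀, hd, hv0⟩
    exact stmt7_sep T X tree conn r t u hu t₀ hu0 hnd
  obtain ⟨h₁c, h₁m⟩ := (hvalid c₁).1 h₁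
  obtain ⟨h₂c, h₂m⟩ := (hvalid c₂).1 h₂
  have hXagree : ∀ u, u ∈ X t → c₃ u = c₂ u := by
    intro u hu
    by_cases h : P u <;> simp [hc₃, h, hagree u hu]
  have hv₃ : valid c₃ := by
    rw [hvalid]
    constructor
    · intro u; by_cases h : P u <;> simp [hc₃, h, h₁c u, h₂c u]
    · intro u v huv hm
      have hadj := meets_adj _ _ _ _ hm
      by_cases hu : P u <;> by_cases hv : P v
      · exact h₁m u v huv (by simpa [hc₃, hu, hv] using hm)
      · have hx := key u v hadj hu hv
        rw [hXagree u hx] at hm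
        exact h₂m u v huv (by simpa [hc₃, hv] using hm)
      · have hx := key v u hadj.symm hv hu
        rw [hXagree v hx] at hm
        exact h₂m u v huv (by simpa [hc₃, hu] using hm)
      · exact h₂m u v huv (by simpa [hc₃, hu, hv] using hm)
  have hsum := hmax₂ c₃ hv₃
  have split3 : ∑ u, c₃ u =
      (∑ u ∈ Finset.univ.filter (fun u => P u), c₁ u) +
      ∑ u ∈ Finset.univ.filter (fun u => ¬ P u), c₂ u := by
    rw [← Finset.sum_filter_add_sum_filter_not Finset.univ (fun u => P u) c₃]
    congr 1
    · exact Finset.sum_congr rfl (fun u hu => by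
        simp only [Finset.mem_filter] at hu; simp [hc₃, hu.2])
    · exact Finset.sum_congr rfl (fun u hu => by
        simp only [Finset.mem_filter] at hu; simp [hc₃, hu.2])
  have split2 : ∑ u, c₂ u =
      (∑ u ∈ Finset.univ.filter (fun u => P u), c₂ u) +
      ∑ u ∈ Finset.univ.filter (fun u => ¬ P u), c₂ u :=
    (Finset.sum_filter_add_sum_filter_not Finset.univ (fun u => P u) c₂).symm
  rw [split3, split2] at hsum
  exact le_of_add_le_add_right hsum

/-- Lemma 1:  Let `C` be the intersection graph, with candidate stub
lengths `cand u` for each vertex and an abstract intersection relation `meets` between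
stubs that can hold only along edges of `C`.  A (full) valid stub set picks one candidate
per vertex so that no two picked stubs intersect; its ink is the sum of picked lengths.
Given a tree decomposition `(T, X)` of `C` rooted at `r`, a node `t`, and two maximum-ink
valid stub sets `c₁, c₂` agreeing on the bag `X t`, the ink of their restrictions to `V_t`
coincide. -/
theorem stmt_7 {V ι : Type*} [Fintype V] (C : SimpleGraph V)
    (T : SimpleGraph ι) (X : ι → Set V) (td : TreeDecompOf C T X) (r : ι)
    (cand : V → Finset ℝ)
    (meets : V → ℝ → V → ℝ → Prop)
    (meets_symm : ∀ u a v b, meets u a v b → meets v b u a)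
    (meets_adj : ∀ u a v b, meets u a v b → C.Adj u v)
    (valid : (V → ℝ) → Prop)
    (hvalid : ∀ c, valid c ↔
      (∀ u, c u ∈ cand u) ∧ ∀ u v, u ≠ v → ¬ meets u (c u) v (c v))
    (t : ι) (c₁ c₂ : V → ℝ)
    (h₁ : valid c₁) (h₂ : valid c₂)
    (hmax₁ : ∀ c, valid c → ∑ u, c u ≤ ∑ u, c₁ u)
    (hmax₂ : ∀ c, valid c → ∑ u, c u ≤ ∑ u, c₂ u)
    (hagree : ∀ u ∈ X t, c₁ u = c₂ u) :
    ∑ u ∈ Finset.univ.filter (fun u => u ∈ bagsBelow T X r t), c₁ u =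
      ∑ u ∈ Finset.univ.filter (fun u => u ∈ bagsBelow T X r t), c₂ u := by
  exact le_antisymm
    (stmt7_le C T X td.tree td.covers_edge td.connected r cand meets meets_symm meets_adj
      valid hvalid t c₁ c₂ h₁ h₂ hmax₂ hagree)
    (stmt7_le C T X td.tree td.covers_edge td.connected r cand meets meets_symm meets_adj
      valid hvalid t c₂ c₁ h₂ h₁ hmax₁ (fun u hu => (hagree u hu).symm))
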